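/- non(MA) = min{𝔟_b^eq : b ∈ ω^ω with b(n) ≥ 2 for all n}, where MA is the ideal of meager-additive subsets of 2^ω. -/

import Mathlib

open Cardinal Set Filter

/-- An interval partition of `ω` into consecutive finite non-empty intervals,
encoded by the strictly increasing sequence of endpoints starting at `0`:
the `n`-th interval is `[r n, r (n+1))`. -/
def IsIntervalPartition (r : ℕ → ℕ) : Prop := r 0 = 0 ∧ StrictMono r

/-- `f ⊏• (I,h)`: for all but finitely many `n` there is `k` in the `n`-th interval
`[r n, r (n+1))` of the partition with `f k = h k`. -/
def SqBullet {b : ℕ → ℕ} (f : ∀ n, Fin (b n)) (r : ℕ → ℕ) (h : ∀ n, Fin (b n)) : Prop :=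
  ∀ᶠ n in atTop, ∃ k, r n ≤ k ∧ k < r (n + 1) ∧ f k = h k

/-- `𝔟_b^eq`: the least size of a family `F ⊆ ∏b` not `⊏•`-dominated by any single
pair `(I,h) ∈ 𝕀 × ∏b`. -/
noncomputable def bEq (b : ℕ → ℕ) : Cardinal :=
  sInf {c : Cardinal | ∃ F : Set (∀ n, Fin (b n)), #F = c ∧
    ¬∃ r : ℕ → ℕ, ∃ h : ∀ n, Fin (b n), IsIntervalPartition r ∧ ∀ f ∈ F, SqBullet f r h}

/-- `𝔡_b^eq`: the least size of a family `D ⊆ 𝕀 × ∏b` which is `⊏•`-dominating. -/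
noncomputable def dEq (b : ℕ → ℕ) : Cardinal :=
  sInf {c : Cardinal | ∃ D : Set ((ℕ → ℕ) × (∀ n, Fin (b n))),
    (∀ p ∈ D, IsIntervalPartition p.1) ∧ #D = c ∧
    ∀ f : ∀ n, Fin (b n), ∃ p ∈ D, SqBullet f p.1 p.2}

/-- The Cantor space `2^ω` as `ℕ → Bool`, a topological group under coordinatewise
addition mod 2 (i.e. pointwise `xor`). -/
abbrev Cantor : Type := ℕ → Bool

/-- The algebraic sum `A + X` of two subsets of `2^ω` (coordinatewise mod-2 addition). -/
def cantorSum (A X : Set Cantor) : Set Cantor :=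
  Set.image2 (fun a x => fun n => xor (a n) (x n)) A X

/-- `X ⊆ 2^ω` is meager-additive: `A + X` is meager for every meager `A`. -/
def IsMeagerAdditive (X : Set Cantor) : Prop :=
  ∀ A : Set Cantor, IsMeagre A → IsMeagre (cantorSum A X)

/-- `non(MA)`: the least cardinality of a non-meager-additive subset of `2^ω`. -/
noncomputable def nonMA : Cardinal :=
  sInf {c : Cardinal | ∃ Y : Set Cantor, #Y = c ∧ ¬IsMeagerAdditive Y}

/-- `cov(MA)`: the least cardinality of a family of meager-additive sets covering `2^ω`. -/
noncomputable def covMA : Cardinal :=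
  sInf {c : Cardinal | ∃ J : Set (Set Cantor),
    (∀ Y ∈ J, IsMeagerAdditive Y) ∧ #J = c ∧ ⋃₀ J = Set.univ}


open Topology

-- cylinder lemmas
lemma cylinder_mem_nhds (x : Cantor) (I : Finset ℕ) :
    {z : Cantor | ∀ i ∈ I, z i = x i} ∈ 𝓝 x := by
  have : {z : Cantor | ∀ i ∈ I, z i = x i} = ⋂ i ∈ I, (fun z : Cantor => z i) ⁻¹' {x i} := by
    ext z; simp
  rw [this, Filter.biInter_finset_mem]
  intro i _
  exact (continuous_apply i).continuousAt (by simp [mem_nhds_discrete])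

lemma nhds_cylinder {x : Cantor} {s : Set Cantor} (hs : s ∈ 𝓝 x) :
    ∃ I : Finset ℕ, {z : Cantor | ∀ i ∈ I, z i = x i} ⊆ s := by
  rw [nhds_pi, Filter.mem_pi'] at hs
  obtain ⟨I, t, ht, hsub⟩ := hs
  refine ⟨I, fun z hz => hsub fun i hi => ?_⟩
  rw [hz i hi]
  exact mem_of_mem_nhds (ht i)

def blockEq (r : ℕ → ℕ) (x u : Cantor) (n : ℕ) : Prop :=
  ∀ i, r n ≤ i → i < r (n + 1) → x i = u i

def mset (r : ℕ → ℕ) (u : Cantor) : Set Cantor :=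
  {x | ∀ᶠ n in atTop, ¬ blockEq r x u n}

lemma isOpen_blockEq (r : ℕ → ℕ) (u : Cantor) (n : ℕ) :
    IsOpen {x : Cantor | blockEq r x u n} := by
  rw [isOpen_iff_mem_nhds]
  intro x hx
  filter_upwards [cylinder_mem_nhds x (Finset.range (r (n+1)))] with z hz i h1 h2
  rw [hz i (Finset.mem_range.mpr h2)]
  exact hx i h1 h2

lemma isClosed_tail (r : ℕ → ℕ) (u : Cantor) (m : ℕ) :
    IsClosed {x : Cantor | ∀ n, m ≤ n → ¬ blockEq r x u n} := by
  have : {x : Cantor | ∀ n, m ≤ n → ¬ blockEq r x u n}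
      = ⋂ n, ⋂ (_ : m ≤ n), {x : Cantor | blockEq r x u n}ᶜ := by
    ext x; simp [mem_iInter]
  rw [this]
  exact isClosed_iInter fun n => isClosed_iInter fun _ => (isOpen_blockEq r u n).isClosed_compl

lemma isNowhereDense_tail {r : ℕ → ℕ} (hr : IsIntervalPartition r) (u : Cantor) (m : ℕ) :
    IsNowhereDense {x : Cantor | ∀ n, m ≤ n → ¬ blockEq r x u n} := by
  rw [(isClosed_tail r u m).isNowhereDense_iff]
  rw [eq_empty_iff_forall_notMem]
  intro x hx
  rw [mem_interior_iff_mem_nhds] at hx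
  obtain ⟨I, hI⟩ := nhds_cylinder hx
  classical
  set n : ℕ := max m (I.sup id + 1) with hn
  set z : Cantor := fun i => if r n ≤ i ∧ i < r (n+1) then u i else x i with hz
  have hzc : z ∈ {z : Cantor | ∀ i ∈ I, z i = x i} := by
    intro i hi
    have h1 : i ≤ I.sup id := Finset.le_sup (f := id) hi
    have h2 : i < r n := by
      have : n ≤ r n := hr.2.le_apply
      omega
    simp only [hz]
    rw [if_neg (by omega)]
  have := hI hzc n (le_max_left _ _)
  apply this
  intro i h1 h2
  simp only [hz]
  rw [if_pos ⟨h1, h2⟩]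

lemma isMeagre_mset {r : ℕ → ℕ} (hr : IsIntervalPartition r) (u : Cantor) :
    IsMeagre (mset r u) := by
  have : mset r u = ⋃ m, {x : Cantor | ∀ n, m ≤ n → ¬ blockEq r x u n} := by
    ext x
    simp only [mset, mem_setOf_eq, eventually_atTop, mem_iUnion]
  rw [this]
  apply isMeagre_iUnion
  intro m
  rw [isMeagre_iff_countable_union_isNowhereDense]
  refine ⟨{{x : Cantor | ∀ n, m ≤ n → ¬ blockEq r x u n}}, ?_, countable_singleton _, by simp⟩
  intro t ht
  rw [mem_singleton_iff] at ht
  subst ht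
  exact isNowhereDense_tail hr u m

-- uniform avoidance lemma
lemma uniform_avoid {G : Set Cantor} (hGc : IsClosed G) (hG : IsNowhereDense G) (m : ℕ) :
    ∃ m' : ℕ, ∃ σ : Cantor, m < m' ∧
      ∀ x : Cantor, (∀ i, m ≤ i → i < m' → x i = σ i) → x ∉ G := by
  classical
  have hden : Dense Gᶜ ∧ IsOpen Gᶜ := by
    have := (isClosed_isNowhereDense_iff_compl (s := G)).mp ⟨hGc, hG⟩
    exact ⟨this.2, this.1⟩
  -- main induction over sets of prefixes
  have key : ∀ S : Finset (Fin m → Bool), ∃ s : Finset ℕ, ∃ σ : Cantor,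
      (∀ i ∈ s, m ≤ i) ∧ ∀ t ∈ S, ∀ x : Cantor, (∀ i : Fin m, x i = t i) →
        (∀ i ∈ s, x i = σ i) → x ∉ G := by
    intro S
    induction S using Finset.induction_on with
    | empty => exact ⟨∅, fun _ => false, by simp, by simp⟩
    | @insert t S htS ih =>
      obtain ⟨s, σ, hs, hS⟩ := ih
      set p : Cantor := fun i => if h : i < m then t ⟨i, h⟩ else σ i with hp
      -- find z in the cylinder around p avoiding G
      have hmem : p ∈ closure Gᶜ := hden.1 p
      rw [mem_closure_iff_nhds] at hmem
      obtain ⟨z, hz1, hz2⟩ := hmem _ (cylinder_mem_nhds p (Finset.range m ∪ s))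
      obtain ⟨s'', hs''⟩ := nhds_cylinder (hden.2.mem_nhds hz2)
      refine ⟨s ∪ s''.filter (fun i => m ≤ i), z, ?_, ?_⟩
      · intro i hi
        rcases Finset.mem_union.mp hi with h | h
        · exact hs i h
        · exact (Finset.mem_filter.mp h).2
      · intro t' ht' x hx hxs
        rcases Finset.mem_insert.mp ht' with h | h
        · -- t' = t : use the new cylinder
          subst h
          have hxz : x ∈ {w : Cantor | ∀ i ∈ s'', w i = z i} := by
            intro i hi
            by_cases him : m ≤ i
            · exact hxs i (Finset.mem_union.mpr (Or.inr (Finset.mem_filter.mpr ⟨hi, him⟩)))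
            · push_neg at him
              have hzi : z i = p i := hz1 i (Finset.mem_union.mpr (Or.inl (Finset.mem_range.mpr him)))
              rw [hzi, hp]
              simp only [dif_pos him]
              exact hx ⟨i, him⟩
          exact fun hG' => (hs'' hxz) hG'
        · -- t' ∈ S : old hypothesis, note z = σ on s
          refine hS t' h x hx ?_
          intro i hi
          have : z i = p i := hz1 i (Finset.mem_union.mpr (Or.inr hi))
          have hpi : p i = σ i := by
            rw [hp]; simp only [dif_neg (Nat.not_lt.mpr (hs i hi))]
          rw [← hpi, ← this]
          exact hxs i (Finset.mem_union.mpr (Or.inl hi))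
  obtain ⟨s, σ, hs, hmain⟩ := key Finset.univ
  refine ⟨max (m + 1) (s.sup id + 1), σ, by omega, ?_⟩
  intro x hx
  refine hmain (fun i : Fin m => x i) (Finset.mem_univ _) x (fun i => rfl) ?_
  intro i hi
  have h1 : m ≤ i := hs i hi
  have h2 : i ≤ s.sup id := Finset.le_sup (f := id) hi
  exact hx i h1 (by omega)

-- block index
def bi (r : ℕ → ℕ) (j : ℕ) : ℕ := Nat.findGreatest (fun n => r n ≤ j) j

lemma bi_le {r : ℕ → ℕ} (h0 : r 0 = 0) (j : ℕ) : r (bi r j) ≤ j :=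
  Nat.findGreatest_spec (P := fun n => r n ≤ j) (Nat.zero_le j)
    (le_of_eq_of_le h0 (Nat.zero_le j))

lemma lt_bi_succ {r : ℕ → ℕ} (hm : StrictMono r) (j : ℕ) : j < r (bi r j + 1) := by
  by_contra h
  push_neg at h
  have h2 : bi r j + 1 ≤ j := le_trans hm.le_apply h
  have h3 := Nat.le_findGreatest (P := fun n => r n ≤ j) h2 h
  simp only [bi] at h3
  omega

lemma bi_eq {r : ℕ → ℕ} (h0 : r 0 = 0) (hm : StrictMono r) {n j : ℕ}
    (h1 : r n ≤ j) (h2 : j < r (n + 1)) : bi r j = n := by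
  have hle : n ≤ bi r j := Nat.le_findGreatest (P := fun n => r n ≤ j) (le_trans hm.le_apply h1) h1
  have hub : r (bi r j) ≤ j := bi_le h0 j
  by_contra hne
  have : n + 1 ≤ bi r j := by omega
  have := hm.monotone this
  omega

lemma nwd_union {s t : Set Cantor} (hs : IsClosed s) (hsn : IsNowhereDense s)
    (ht : IsClosed t) (htn : IsNowhereDense t) : IsNowhereDense (s ∪ t) := by
  rw [(hs.union ht).isNowhereDense_iff]
  rw [hs.isNowhereDense_iff] at hsn
  rw [ht.isNowhereDense_iff] at htn
  have h1 : interior (s ∪ t) \ s ⊆ interior t := by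
    apply interior_maximal
    · intro z hz
      rcases (interior_subset hz.1) with h | h
      · exact absurd h hz.2
      · exact h
    · exact isOpen_interior.sdiff hs
  rw [htn] at h1
  have h2 : interior (s ∪ t) ⊆ s := by
    intro z hz
    by_contra hzs
    exact h1 ⟨hz, hzs⟩
  have h3 : interior (s ∪ t) ⊆ interior s := interior_maximal h2 isOpen_interior
  rw [hsn] at h3
  exact eq_empty_iff_forall_notMem.mpr fun z hz => h3 hz

lemma exists_canonical {A : Set Cantor} (hA : IsMeagre A) :
    ∃ r : ℕ → ℕ, ∃ y : Cantor, IsIntervalPartition r ∧ A ⊆ mset r y := by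
  classical
  rw [isMeagre_iff_countable_union_isNowhereDense] at hA
  obtain ⟨S, hSnwd, hScnt, hAsub⟩ := hA
  obtain ⟨g, hg⟩ := (hScnt.insert ∅).exists_eq_range ⟨∅, mem_insert _ _⟩
  have hgnwd : ∀ n, IsNowhereDense (g n) := by
    intro n
    have : g n ∈ insert (∅ : Set Cantor) S := hg ▸ mem_range_self n
    rcases mem_insert_iff.mp this with h | h
    · rw [h]; exact isNowhereDense_empty
    · exact hSnwd _ h
  set G : ℕ → Set Cantor := fun n => ⋃ k ∈ Finset.range (n + 1), closure (g k) with hGdef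
  have hGclosed : ∀ n, IsClosed (G n) := fun n =>
    Set.Finite.isClosed_biUnion (Finset.finite_toSet _) (fun k _ => isClosed_closure)
  have hGsucc : ∀ n, G (n + 1) = G n ∪ closure (g (n + 1)) := by
    intro n
    simp only [hGdef]
    rw [Finset.range_add_one, Finset.set_biUnion_insert]
    exact Set.union_comm _ _
  have hGnwd : ∀ n, IsNowhereDense (G n) := by
    intro n
    induction n with
    | zero => simpa [hGdef] using (hgnwd 0).closure
    | succ k ih =>
      rw [hGsucc]
      exact nwd_union (hGclosed k) ih isClosed_closure (hgnwd (k + 1)).closure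
  have hGmono : ∀ {n n'}, n ≤ n' → G n ⊆ G n' := by
    intro n n' h
    simp only [hGdef]
    intro x hx
    rw [mem_iUnion₂] at hx ⊢
    obtain ⟨k, hk, hxk⟩ := hx
    exact ⟨k, Finset.mem_range.mpr (by have := Finset.mem_range.mp hk; omega), hxk⟩
  -- choice of steps
  have hstep : ∀ n m, ∃ p : ℕ × Cantor, m < p.1 ∧
      ∀ x : Cantor, (∀ i, m ≤ i → i < p.1 → x i = p.2 i) → x ∉ G n := by
    intro n m
    obtain ⟨m', σ, h1, h2⟩ := uniform_avoid (hGclosed n) (hGnwd n) m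
    exact ⟨(m', σ), h1, h2⟩
  choose step hstep1 hstep2 using hstep
  set r : ℕ → ℕ := fun n => Nat.rec 0 (fun k rk => (step k rk).1) n with hrdef
  have hr0 : r 0 = 0 := rfl
  have hrsucc : ∀ n, r (n + 1) = (step n (r n)).1 := fun n => rfl
  have hrmono : StrictMono r := strictMono_nat_of_lt_succ fun n => by
    rw [hrsucc]; exact hstep1 n (r n)
  set y : Cantor := fun i => (step (bi r i) (r (bi r i))).2 i with hydef
  refine ⟨r, y, ⟨hr0, hrmono⟩, ?_⟩
  intro x hx
  have : x ∈ ⋃ n, g n := by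
    have h1 : A ⊆ ⋃₀ (insert ∅ S) := hAsub.trans (sUnion_subset_sUnion (subset_insert _ _))
    rw [hg, sUnion_range] at h1
    exact h1 hx
  obtain ⟨N, hN⟩ := mem_iUnion.mp this
  rw [mset, mem_setOf_eq, eventually_atTop]
  refine ⟨N, fun n hn hblock => ?_⟩
  have hxG : x ∈ G n := hGmono hn (Set.mem_biUnion (Finset.self_mem_range_succ N) (subset_closure hN))
  apply hstep2 n (r n) x _ hxG
  intro i h1 h2
  have hbi : bi r i = n := bi_eq hr0 hrmono h1 (by rw [hrsucc] at *; exact h2)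
  have := hblock i h1 (by rw [hrsucc]; exact h2)
  rw [this, hydef]
  simp only [hbi]

lemma core_lemma {r t : ℕ → ℕ} (hr : IsIntervalPartition r) (ht : IsIntervalPartition t)
    {y v : Cantor} (H : mset r y ⊆ mset t v) :
    ∀ᶠ n in atTop, ∃ k, t n ≤ r k ∧ r (k + 1) ≤ t (n + 1) ∧
      ∀ i, r k ≤ i → i < r (k + 1) → v i = y i := by
  classical
  by_contra hbad
  rw [Filter.not_eventually] at hbad
  have hfreq := Filter.frequently_atTop.mp hbad
  have hex : ∀ p : ℕ, ∃ n, p ≤ n ∧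
      ¬ ∃ k, t n ≤ r k ∧ r (k + 1) ≤ t (n + 1) ∧
        ∀ i, r k ≤ i → i < r (k + 1) → v i = y i := by
    intro p
    obtain ⟨n, h1, h2⟩ := hfreq p
    exact ⟨n, h1, h2⟩
  choose nxt hnxt1 hnxt2 using hex
  set N : ℕ → ℕ := fun j => Nat.rec (nxt 0)
    (fun _ Nj => nxt (r (bi r (t (Nj + 1) - 1) + 1))) j with hNdef
  have hN0 : N 0 = nxt 0 := rfl
  have hNsucc : ∀ j, N (j + 1) = nxt (r (bi r (t (N j + 1) - 1) + 1)) := fun j => rfl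
  clear_value N
  have hBad : ∀ j, ¬ ∃ k, t (N j) ≤ r k ∧ r (k + 1) ≤ t (N j + 1) ∧
      ∀ i, r k ≤ i → i < r (k + 1) → v i = y i := by
    intro j
    cases j with
    | zero => rw [hN0]; exact hnxt2 0
    | succ j' => rw [hNsucc]; exact hnxt2 _
  -- sparseness: if I_k meets T_{N j} then r (k+1) ≤ t (N (j+1))
  have hsparse : ∀ j k, r k < t (N j + 1) → t (N j) < r (k + 1) →
      r (k + 1) ≤ t (N (j + 1)) := by
    intro j k h1 _h2
    have htpos : 0 < t (N j + 1) := lt_of_le_of_lt (Nat.zero_le _) (ht.2 (Nat.lt_succ_self _))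
    have hrk : r k ≤ t (N j + 1) - 1 := by omega
    have hbi2 : t (N j + 1) - 1 < r (bi r (t (N j + 1) - 1) + 1) := lt_bi_succ hr.2 _
    have hkle : k ≤ bi r (t (N j + 1) - 1) := by
      by_contra hc
      push_neg at hc
      have : r (bi r (t (N j + 1) - 1) + 1) ≤ r k := hr.2.monotone hc
      omega
    have hk1 : r (k + 1) ≤ r (bi r (t (N j + 1) - 1) + 1) :=
      hr.2.monotone (by omega)
    have hNj1 : r (bi r (t (N j + 1) - 1) + 1) ≤ N (j + 1) := by
      rw [hNsucc j]; exact hnxt1 _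
    have hfin : N (j + 1) ≤ t (N (j + 1)) := ht.2.le_apply
    omega
  have hNlt : ∀ j, N j < N (j + 1) := by
    intro j
    have htpos : 0 < t (N j + 1) := lt_of_le_of_lt (Nat.zero_le _) (ht.2 (Nat.lt_succ_self _))
    have hbi2 : t (N j + 1) - 1 < r (bi r (t (N j + 1) - 1) + 1) := lt_bi_succ hr.2 _
    have hNj1 : r (bi r (t (N j + 1) - 1) + 1) ≤ N (j + 1) := by
      rw [hNsucc j]; exact hnxt1 _
    have h1 : N j + 1 ≤ t (N j + 1) := ht.2.le_apply
    omega
  have hNmono : StrictMono N := strictMono_nat_of_lt_succ hNlt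
  set a : Cantor := fun i =>
    if ∃ j, t (N j) ≤ i ∧ i < t (N j + 1) then v i else ! (y i) with hadef
  have haIn : ∀ i j, t (N j) ≤ i → i < t (N j + 1) → a i = v i := by
    intro i j h1 h2
    simp only [hadef]
    rw [if_pos ⟨j, h1, h2⟩]
  -- a is in mset r y
  have haM : a ∈ mset r y := by
    rw [mset, mem_setOf_eq, eventually_atTop]
    refine ⟨0, fun k _ hblock => ?_⟩
    by_cases hin : ∃ j, t (N j) ≤ r k ∧ r (k + 1) ≤ t (N j + 1)
    · obtain ⟨j, hj1, hj2⟩ := hin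
      apply hBad j
      refine ⟨k, hj1, hj2, fun i hi1 hi2 => ?_⟩
      have hva : a i = v i := haIn i j (le_trans hj1 hi1) (lt_of_lt_of_le hi2 hj2)
      rw [← hva, hblock i hi1 hi2]
    · by_cases hall : ∀ i, r k ≤ i → i < r (k + 1) → ∃ j, t (N j) ≤ i ∧ i < t (N j + 1)
      · exfalso
        have hrk : r k < r (k + 1) := hr.2 (Nat.lt_succ_self k)
        obtain ⟨j0, hj01, hj02⟩ := hall (r k) le_rfl hrk
        have h2 : t (N j0 + 1) < r (k + 1) := by
          by_contra hcon
          push_neg at hcon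
          exact hin ⟨j0, hj01, hcon⟩
        obtain ⟨j1, hj11, hj12⟩ := hall (t (N j0 + 1)) (le_of_lt hj02) h2
        have hjne : j0 ≠ j1 := by
          intro he
          rw [← he] at hj12
          omega
        rcases Nat.lt_or_ge j0 j1 with hlt | hge
        · have hb := hsparse j0 k hj02 (by omega)
          have hle : N (j0 + 1) ≤ N j1 := hNmono.monotone (by omega)
          have hle2 : t (N (j0 + 1)) ≤ t (N j1) := ht.2.monotone hle
          omega
        · have hj1lt : j1 < j0 := by omega
          have hmeet1 : r k < t (N j1 + 1) := lt_of_lt_of_le hj02 (le_of_lt hj12)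
          have hmeet2 : t (N j1) < r (k + 1) := by omega
          have hb := hsparse j1 k hmeet1 hmeet2
          have hle : N (j1 + 1) ≤ N j0 := hNmono.monotone (by omega)
          have hle2 : t (N (j1 + 1)) ≤ t (N j0) := ht.2.monotone hle
          omega
      · push_neg at hall
        obtain ⟨i, hi1, hi2, hi3⟩ := hall
        have hnot : ¬ ∃ j, t (N j) ≤ i ∧ i < t (N j + 1) := by
          rintro ⟨j, hj1, hj2⟩
          have := hi3 j hj1
          omega
        have hai : a i = ! (y i) := by
          simp only [hadef]
          rw [if_neg hnot]
        have := hblock i hi1 hi2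
        rw [hai] at this
        exact Bool.not_ne_self (y i) this
  -- but a is not in mset t v
  have := H haM
  rw [mset, mem_setOf_eq, eventually_atTop] at this
  obtain ⟨M, hM⟩ := this
  apply hM (N M) hNmono.le_apply
  intro i h1 h2
  exact haIn i M h1 h2

lemma dirB {b : ℕ → ℕ} (hb : ∀ n, 2 ≤ b n) {F : Set (∀ n, Fin (b n))}
    (hF : ¬∃ r : ℕ → ℕ, ∃ h : ∀ n, Fin (b n), IsIntervalPartition r ∧ ∀ f ∈ F, SqBullet f r h) :
    ∃ Y : Set Cantor, ¬IsMeagerAdditive Y ∧ #Y ≤ #F := by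
  classical
  -- the partition determined by b
  set r : ℕ → ℕ := fun n => ∑ i ∈ Finset.range n, b i with hrdef
  have hr0 : r 0 = 0 := Finset.sum_range_zero _
  have hrs : ∀ n, r (n + 1) = r n + b n := fun n => Finset.sum_range_succ _ _
  have hrm : StrictMono r := strictMono_nat_of_lt_succ fun n => by
    have := hb n; rw [hrs]; omega
  -- coding of elements of ∏b
  set xf : (∀ n, Fin (b n)) → Cantor :=
    fun f j => decide (j - r (bi r j) = (f (bi r j)).val) with hxfdef
  have hcode : ∀ f k i, i < b k → xf f (r k + i) = decide (i = (f k).val) := by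
    intro f k i hi
    have h1 : r k ≤ r k + i := Nat.le_add_right _ _
    have h2 : r k + i < r (k + 1) := by rw [hrs]; omega
    have hbieq : bi r (r k + i) = k := bi_eq hr0 hrm h1 h2
    simp only [hxfdef]
    rw [hbieq, Nat.add_sub_cancel_left]
  refine ⟨xf '' F, ?_, Cardinal.mk_image_le⟩
  -- F is nonempty
  have hFne : F.Nonempty := by
    by_contra hne
    rw [not_nonempty_iff_eq_empty] at hne
    subst hne
    exact hF ⟨id, fun n => ⟨0, by have := hb n; omega⟩, ⟨rfl, strictMono_id⟩, by simp⟩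
  obtain ⟨f0, hf0⟩ := hFne
  -- suppose Y were meager-additive
  intro hMA
  have hA : IsMeagre (mset r (fun _ => false)) := isMeagre_mset ⟨hr0, hrm⟩ _
  have hC : IsMeagre (cantorSum (mset r (fun _ => false)) (xf '' F)) := hMA _ hA
  obtain ⟨t, u, htIP, hCsub⟩ := exists_canonical hC
  -- matching property for each f ∈ F
  have hmatch : ∀ f ∈ F, ∀ᶠ n in atTop, ∃ k, t n ≤ r k ∧ r (k + 1) ≤ t (n + 1) ∧
      ∀ i, r k ≤ i → i < r (k + 1) → xf f i = u i := by
    intro f hf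
    have hsub : mset r (fun _ => false) ⊆ mset t (fun i => xor (xf f i) (u i)) := by
      intro a ha
      have haw : (fun n => xor (a n) (xf f n)) ∈ cantorSum (mset r (fun _ => false)) (xf '' F) :=
        Set.mem_image2_of_mem ha (Set.mem_image_of_mem _ hf)
      have := hCsub haw
      rw [mset, mem_setOf_eq] at this ⊢
      filter_upwards [this] with n hn hblock
      apply hn
      intro i h1 h2
      have hbl := hblock i h1 h2
      show xor (a i) (xf f i) = u i
      rw [hbl]
      have : ∀ q w : Bool, xor (xor q w) q = w := by decide
      exact this _ _
    have := core_lemma ⟨hr0, hrm⟩ htIP hsub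
    filter_upwards [this] with n ⟨k, h1, h2, h3⟩
    refine ⟨k, h1, h2, fun i hi1 hi2 => ?_⟩
    have hq := h3 i hi1 hi2
    have : ∀ q w : Bool, xor q w = false → q = w := by decide
    exact this _ _ hq
  -- the index map s
  have hsex : ∀ n : ℕ, ∃ k, t n ≤ r k := fun n => ⟨t n, hrm.le_apply⟩
  set s : ℕ → ℕ := fun n => Nat.find (hsex n) with hsdef
  have hs_spec : ∀ n, t n ≤ r (s n) := fun n => Nat.find_spec (hsex n)
  have hlocate : ∀ n k, t n ≤ r k → r (k + 1) ≤ t (n + 1) → s n ≤ k ∧ k < s (n + 1) := by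
    intro n k h1 h2
    constructor
    · by_contra hc
      push_neg at hc
      exact Nat.find_min (hsex n) hc h1
    · by_contra hc
      push_neg at hc
      have e1 : r (s (n + 1)) ≤ r k := hrm.monotone hc
      have e2 : t (n + 1) ≤ r (s (n + 1)) := hs_spec (n + 1)
      have e3 : r k < r (k + 1) := hrm (Nat.lt_succ_self k)
      omega
  -- strictness threshold from f0
  obtain ⟨n1, hn1⟩ := eventually_atTop.mp (hmatch f0 hf0)
  have hstrict : ∀ n, n1 ≤ n → s n < s (n + 1) := by
    intro n hn
    obtain ⟨k, h1, h2, _⟩ := hn1 n hn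
    obtain ⟨e1, e2⟩ := hlocate n k h1 h2
    omega
  set s' : ℕ → ℕ := fun m => if m = 0 then 0 else s (n1 + m) with hs'def
  have hs'IP : IsIntervalPartition s' := by
    refine ⟨if_pos rfl, strictMono_nat_of_lt_succ fun m => ?_⟩
    cases m with
    | zero =>
      simp only [hs'def, if_pos, if_neg (Nat.one_ne_zero)]
      have := hstrict n1 le_rfl
      have : s (n1 + 1) ≥ 1 := by
        have h0 : 0 ≤ s n1 := Nat.zero_le _
        omega
      exact this
    | succ m' =>
      simp only [hs'def, if_neg (Nat.succ_ne_zero _)]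
      have := hstrict (n1 + (m' + 1)) (by omega)
      have heq : n1 + (m' + 1) + 1 = n1 + (m' + 1 + 1) := by omega
      rw [← heq]
      exact this
  -- the guess h
  set hh : ∀ k, Fin (b k) := fun k =>
    if hyp : ∃ j : Fin (b k), ∀ i, i < b k → u (r k + i) = decide (i = j.val)
    then hyp.choose else ⟨0, by have := hb k; omega⟩ with hhdef
  apply hF
  refine ⟨s', hh, hs'IP, ?_⟩
  intro f hf
  obtain ⟨n2, hn2⟩ := eventually_atTop.mp (hmatch f hf)
  rw [SqBullet, eventually_atTop]
  refine ⟨n2 + 1, fun m hm => ?_⟩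
  obtain ⟨k, h1, h2, h3⟩ := hn2 (n1 + m) (by omega)
  obtain ⟨e1, e2⟩ := hlocate (n1 + m) k h1 h2
  have hm0 : m ≠ 0 := by omega
  refine ⟨k, ?_, ?_, ?_⟩
  · simp only [hs'def, if_neg hm0]; exact e1
  · simp only [hs'def, if_neg (Nat.succ_ne_zero m)]
    have heq : n1 + m + 1 = n1 + (m + 1) := by omega
    rw [← heq]; exact e2
  · -- f k = hh k
    have hu : ∀ i, i < b k → u (r k + i) = decide (i = (f k).val) := by
      intro i hi
      rw [← h3 (r k + i) (Nat.le_add_right _ _) (by rw [hrs]; omega)]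
      exact hcode f k i hi
    have hyp : ∃ j : Fin (b k), ∀ i, i < b k → u (r k + i) = decide (i = j.val) :=
      ⟨f k, hu⟩
    have hhk : hh k = hyp.choose := by simp only [hhdef, dif_pos hyp]
    have hspec := hyp.choose_spec
    have hfk := (f k).isLt
    have hch : (f k).val = (hyp.choose).val := by
      have hdd := (hspec (f k).val hfk).symm.trans (hu (f k).val hfk)
      simp only [decide_eq_decide] at hdd
      exact hdd.mpr trivial
    rw [hhk]
    exact Fin.ext hch

lemma dirA {Y : Set Cantor} (hY : ¬IsMeagerAdditive Y) :
    ∃ b : ℕ → ℕ, (∀ n, 2 ≤ b n) ∧ ∃ F : Set (∀ n, Fin (b n)), #F ≤ #Y ∧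
      ¬∃ s : ℕ → ℕ, ∃ h : ∀ n, Fin (b n), IsIntervalPartition s ∧ ∀ f ∈ F, SqBullet f s h := by
  classical
  rw [IsMeagerAdditive] at hY
  push_neg at hY
  obtain ⟨A, hA, hC⟩ := hY
  obtain ⟨r, y, hrIP, hAsub⟩ := exists_canonical hA
  obtain ⟨hr0, hrm⟩ := hrIP
  set b : ℕ → ℕ := fun n => 2 ^ (r (n + 1) - r n) with hbdef
  have hb : ∀ n, 2 ≤ b n := by
    intro n
    have h1 : 1 ≤ r (n + 1) - r n := by
      have := hrm (by omega : n < n + 1); omega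
    calc 2 = 2 ^ 1 := rfl
    _ ≤ 2 ^ (r (n + 1) - r n) := Nat.pow_le_pow_right (by omega) h1
  set E : ∀ n, (Fin (r (n + 1) - r n) → Bool) ≃ Fin (b n) :=
    fun n => (Equiv.arrowCongr (Equiv.refl _) finTwoEquiv.symm).trans finFunctionFinEquiv
    with hEdef
  set fx : Cantor → ∀ n, Fin (b n) := fun x n => E n (fun i => x (r n + i.val)) with hfxdef
  refine ⟨b, hb, fx '' Y, Cardinal.mk_image_le, ?_⟩
  rintro ⟨s, h, hsIP, hdom⟩
  -- decode h into z
  set dec : ℕ → ℕ → Bool := fun n j =>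
    if hj : j - r n < r (n + 1) - r n then (E n).symm (h n) ⟨j - r n, hj⟩ else false with hdecdef
  set z : Cantor := fun j => dec (bi r j) j with hzdef
  have hdecode : ∀ x k, fx x k = h k → ∀ i, r k ≤ i → i < r (k + 1) → x i = z i := by
    intro x k hk i h1 h2
    have hbieq : bi r i = k := bi_eq hr0 hrm h1 h2
    have hlt : i - r k < r (k + 1) - r k := by omega
    have hz : z i = (E k).symm (h k) ⟨i - r k, hlt⟩ := by
      simp only [hzdef]
      rw [hbieq]
      simp only [hdecdef]
      rw [dif_pos hlt]
    rw [hz, ← hk]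
    simp only [hfxdef]
    rw [Equiv.symm_apply_apply]
    have : r k + (i - r k) = i := by omega
    rw [this]
  -- the sum is contained in a canonical meager set
  apply hC
  have hsubset : cantorSum A Y ⊆ mset (r ∘ s) (fun i => xor (y i) (z i)) := by
    rintro w ⟨a, haA, x, hxY, rfl⟩
    have haM := hAsub haA
    rw [mset, mem_setOf_eq, eventually_atTop] at haM
    obtain ⟨K, hK⟩ := haM
    have hdx := hdom (fx x) (Set.mem_image_of_mem _ hxY)
    rw [SqBullet, eventually_atTop] at hdx
    obtain ⟨M, hM⟩ := hdx
    rw [mset, mem_setOf_eq, eventually_atTop]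
    refine ⟨max M K, fun m hm hblock => ?_⟩
    obtain ⟨k, e1, e2, e3⟩ := hM m (le_trans (le_max_left _ _) hm)
    have hkK : K ≤ k := le_trans (le_trans (le_max_right M K) hm) (le_trans hsIP.2.le_apply e1)
    have hnb := hK k hkK
    apply hnb
    intro i h1 h2
    have hxz : x i = z i := hdecode x k e3 i h1 h2
    have hw : r (s m) ≤ i ∧ i < r (s (m + 1)) := by
      constructor
      · exact le_trans (hrm.monotone e1) h1
      · exact lt_of_lt_of_le h2 (hrm.monotone e2)
    have hthis : xor (a i) (x i) = xor (y i) (z i) := hblock i hw.1 hw.2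
    rw [hxz] at hthis
    have haux : ∀ p q w : Bool, xor p w = xor q w → p = q := by decide
    exact haux _ _ _ hthis
  have hcomp : IsIntervalPartition (r ∘ s) := by
    refine ⟨?_, hrm.comp hsIP.2⟩
    show r (s 0) = 0
    rw [hsIP.1, hr0]
  exact (isMeagre_mset hcomp _).mono hsubset

lemma not_MA_univ : ¬ IsMeagerAdditive (Set.univ : Set Cantor) := by
  classical
  intro hMA
  set c : Cantor := fun _ => false with hc
  have hsing : IsMeagre ({c} : Set Cantor) := by
    rw [isMeagre_iff_countable_union_isNowhereDense]
    refine ⟨{{c}}, ?_, countable_singleton _, by simp⟩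
    intro t ht
    rw [mem_singleton_iff] at ht
    subst ht
    rw [IsClosed.isNowhereDense_iff isClosed_singleton]
    rw [eq_empty_iff_forall_notMem]
    intro x hx
    rw [mem_interior_iff_mem_nhds] at hx
    obtain ⟨I, hI⟩ := nhds_cylinder hx
    have h1 : x ∈ {z : Cantor | ∀ i ∈ I, z i = x i} := fun i _ => rfl
    set p : ℕ := I.sup id + 1 with hp
    have hpI : p ∉ I := by
      intro hmem
      have := Finset.le_sup (f := id) hmem
      simp only [id] at this
      omega
    set x' : Cantor := Function.update x p (! x p) with hx'
    have h2 : x' ∈ {z : Cantor | ∀ i ∈ I, z i = x i} := by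
      intro i hi
      simp only [hx']
      rw [Function.update_of_ne (fun he => hpI (by rwa [he] at hi))]
    have e1 : x = c := hI h1
    have e2 : x' = c := hI h2
    have : x' p = x p := by rw [e1, e2]
    simp only [hx', Function.update_self] at this
    exact Bool.not_ne_self (x p) this
  have hmeag := hMA _ hsing
  have heq : cantorSum ({c} : Set Cantor) Set.univ = Set.univ := by
    apply eq_univ_of_forall
    intro w
    refine ⟨c, rfl, fun n => xor (c n) (w n), mem_univ _, funext fun n => ?_⟩
    have : ∀ p q : Bool, xor p (xor p q) = q := by decide
    exact this _ _
  rw [heq] at hmeag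
  rw [IsMeagre, compl_univ] at hmeag
  have hdense := dense_of_mem_residual hmeag
  exact Set.not_nonempty_empty hdense.nonempty


/-- `non(MA) = min{𝔟_b^eq : b ∈ ω^ω, b(n) ≥ 2 for all n}`, where `MA` is the ideal of
meager-additive subsets of `2^ω`. -/
theorem nonMA_eq_min_bEq :
    nonMA = sInf {c : Cardinal | ∃ b : ℕ → ℕ, (∀ n, 2 ≤ b n) ∧ bEq b = c} := by
  have hbdd : ∀ s : Set Cardinal, BddBelow s := fun s => OrderBot.bddBelow s
  apply le_antisymm
  · refine le_csInf ⟨bEq (fun _ => 2), (fun _ => 2), fun _ => le_rfl, rfl⟩ ?_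
    rintro c ⟨b, hb, rfl⟩
    have hne : {c : Cardinal | ∃ F : Set (∀ n, Fin (b n)), #F = c ∧
        ¬∃ r : ℕ → ℕ, ∃ h : ∀ n, Fin (b n), IsIntervalPartition r ∧
          ∀ f ∈ F, SqBullet f r h}.Nonempty := by
      refine ⟨#(univ : Set (∀ n, Fin (b n))), univ, rfl, ?_⟩
      rintro ⟨r, h, hIP, hall⟩
      set f : ∀ n, Fin (b n) := fun n =>
        if (h n).val = 0 then ⟨1, lt_of_lt_of_le one_lt_two (hb n)⟩
        else ⟨0, lt_of_lt_of_le two_pos (hb n)⟩ with hf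
      have hfne : ∀ n, f n ≠ h n := by
        intro n he
        by_cases h0 : (h n).val = 0
        · have hv : (f n).val = 1 := by simp only [hf]; rw [if_pos h0]
          rw [he] at hv; omega
        · have hv : (f n).val = 0 := by simp only [hf]; rw [if_neg h0]
          rw [he] at hv; omega
      have := hall f (mem_univ f)
      rw [SqBullet, eventually_atTop] at this
      obtain ⟨M, hM⟩ := this
      obtain ⟨k, _, _, heq⟩ := hM M le_rfl
      exact hfne k heq
    obtain ⟨F, hFcard, hFun⟩ := csInf_mem hne
    obtain ⟨Y, hYnMA, hYle⟩ := dirB hb hFun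
    have h1 : nonMA ≤ #Y := csInf_le (hbdd _) ⟨Y, rfl, hYnMA⟩
    calc nonMA ≤ #Y := h1
    _ ≤ #F := hYle
    _ = bEq b := hFcard
  · have hne : {c : Cardinal | ∃ Y : Set Cantor, #Y = c ∧ ¬IsMeagerAdditive Y}.Nonempty :=
      ⟨#(univ : Set Cantor), univ, rfl, not_MA_univ⟩
    obtain ⟨Y, hYcard, hYnMA⟩ := csInf_mem hne
    obtain ⟨b, hb, F, hFle, hFun⟩ := dirA hYnMA
    have h1 : bEq b ≤ #F := csInf_le (hbdd _) ⟨F, rfl, hFun⟩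
    refine csInf_le_of_le (hbdd _) ⟨b, hb, rfl⟩ ?_
    calc bEq b ≤ #F := h1
    _ ≤ #Y := hFle
    _ = nonMA := hYcard
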